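/- Let (M,d) be a compact metric space, L > 0, and let A be a set of L-Lipschitz curves ℝ → M that is invariant under every time shift. Let c ≥ 1 be an integer and let Ã = {t ↦ γ(t/c) : γ ∈ A}. If the topological entropy of the time-one shift F₁ restricted to (Ã,ρ) is infinite, then the topological entropy of F₁ restricted to (A,ρ) is infinite. -/

import Mathlib

open Filter

/-- The metric `ρ` on the space of curves `ℝ → M`. -/
noncomputable def rho {M : Type*} [PseudoMetricSpace M] (γ₁ γ₂ : ℝ → M) : ℝ :=
  ∑' i : ℤ, (2 : ℝ) ^ (-|i|) * ∫ t in (i : ℝ)..((i : ℝ) + 1), dist (γ₁ t) (γ₂ t)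

/-- The time-one shift on curves: `F₁(γ)(t) = γ(t + 1)`. -/
def timeOneShift {M : Type*} (γ : ℝ → M) : ℝ → M := fun t => γ (t + 1)

/-- A curve `γ : ℝ → M` is `L`-Lipschitz. -/
def LipschitzCurve {M : Type*} [PseudoMetricSpace M] (L : ℝ) (γ : ℝ → M) : Prop :=
  ∀ s t : ℝ, dist (γ s) (γ t) ≤ L * |s - t|

/-- `E` is an `(n, ε)`-dense subset of `F` for the map `f` and the distance `d`:
`E ⊆ F` and the dynamical balls `{y | d_n^f(x,y) < ε}`, `x ∈ E`, cover `F`. -/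
def IsDynCover {X : Type*} (d : X → X → ℝ) (f : X → X) (F : Set X) (ε : ℝ) (n : ℕ)
    (E : Finset X) : Prop :=
  ↑E ⊆ F ∧ ∀ y ∈ F, ∃ x ∈ E, ∀ i < n, d (f^[i] x) (f^[i] y) < ε

/-- `S_d(f, ε, n)`: the minimal cardinality of an `(n, ε)`-dense subset of `F`. -/
noncomputable def coverCard {X : Type*} (d : X → X → ℝ) (f : X → X) (F : Set X) (ε : ℝ)
    (n : ℕ) : ℕ∞ :=
  ⨅ (E : Finset X) (_ : IsDynCover d f F ε n E), (E.card : ℕ∞)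

/-- The topological entropy of `f` on `F`, w.r.t. the distance `d`:
`h(f) = lim_{ε → 0⁺} limsup_{n → ∞} (1/n) log S_d(f, ε, n)`; since the inner rate is
antitone in `ε`, the limit is realized as the supremum over `ε > 0`. -/
noncomputable def topEntropy {X : Type*} (d : X → X → ℝ) (f : X → X) (F : Set X) : EReal :=
  ⨆ (ε : ℝ) (_ : (0 : ℝ) < ε),
    atTop.limsup fun n : ℕ => ENNReal.log (coverCard d f F ε n) / (n : EReal)

/-- The time-rescaling map `H(γ)(t) = γ(t/c)`. -/
noncomputable def timeRescale {M : Type*} (c : ℕ) (γ : ℝ → M) : ℝ → M := fun t => γ (t / c)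


open MeasureTheory intervalIntegral

namespace E13
variable {M : Type*} [MetricSpace M] [CompactSpace M]

lemma exists_bound (M : Type*) [MetricSpace M] [CompactSpace M] :
    ∃ D : ℝ, 0 ≤ D ∧ ∀ x y : M, dist x y ≤ D := by
  obtain ⟨C, hC⟩ := Metric.isBounded_iff.1 (isCompact_univ (X := M)).isBounded
  exact ⟨max C 0, le_max_right _ _, fun x y =>
    le_trans (hC (Set.mem_univ x) (Set.mem_univ y)) (le_max_left _ _)⟩

lemma phi_ii {γ₁ γ₂ : ℝ → M} (h₁ : Continuous γ₁) (h₂ : Continuous γ₂) (a b : ℝ) :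
    IntervalIntegrable (fun t => dist (γ₁ t) (γ₂ t)) volume a b :=
  (h₁.dist h₂).intervalIntegrable a b

lemma summable_geom_int {r : ℝ} (h0 : 0 ≤ r) (h1 : r < 1) :
    Summable (fun i : ℤ => r ^ i.natAbs) := by
  have hg : Summable (fun n : ℕ => r ^ n) :=
    summable_geometric_of_lt_one h0 h1
  apply Summable.of_nat_of_neg <;> simpa using hg

lemma rho_term_nonneg {γ₁ γ₂ : ℝ → M} (i : ℤ) :
    0 ≤ (2 : ℝ) ^ (-|i|) * ∫ t in (i : ℝ)..((i : ℝ) + 1), dist (γ₁ t) (γ₂ t) := by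
  apply mul_nonneg (by positivity)
  apply intervalIntegral.integral_nonneg (by linarith) (fun _ _ => dist_nonneg)

lemma rho_summable {γ₁ γ₂ : ℝ → M} (h₁ : Continuous γ₁) (h₂ : Continuous γ₂) :
    Summable (fun i : ℤ =>
      (2 : ℝ) ^ (-|i|) * ∫ t in (i : ℝ)..((i : ℝ) + 1), dist (γ₁ t) (γ₂ t)) := by
  obtain ⟨D, hD0, hD⟩ := exists_bound (M := M)
  apply Summable.of_nonneg_of_le
    (g := fun i : ℤ =>
      (2 : ℝ) ^ (-|i|) * ∫ t in (i : ℝ)..((i : ℝ) + 1), dist (γ₁ t) (γ₂ t))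
    (f := fun i : ℤ => D * (2⁻¹ : ℝ) ^ i.natAbs)
    (fun i => rho_term_nonneg (γ₁ := γ₁) (γ₂ := γ₂) i)
  · intro i
    have h2 : (2:ℝ) ^ (-|i|) = (2⁻¹ : ℝ) ^ i.natAbs := by
      rw [zpow_neg, Int.abs_eq_natAbs, zpow_natCast, inv_pow]
    have hI : (∫ t in (i : ℝ)..((i : ℝ) + 1), dist (γ₁ t) (γ₂ t)) ≤ D := by
      have := intervalIntegral.norm_integral_le_of_norm_le_const
        (C := D) (f := fun t => dist (γ₁ t) (γ₂ t)) (a := (i:ℝ)) (b := (i:ℝ)+1)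
        (fun x _ => by rw [Real.norm_eq_abs, abs_of_nonneg dist_nonneg]; exact hD _ _)
      rw [show ((i:ℝ)+1) - i = 1 by ring, abs_one, mul_one] at this
      exact (le_abs_self _).trans ((Real.norm_eq_abs _ ▸ this))
    rw [h2, mul_comm D _]
    exact mul_le_mul_of_nonneg_left hI (by positivity)
  · exact (summable_geom_int (by norm_num) (by norm_num)).mul_left D

lemma rho_nonneg {γ₁ γ₂ : ℝ → M} : 0 ≤ rho γ₁ γ₂ :=
  tsum_nonneg (fun i => rho_term_nonneg i)

lemma integral_le_rho {γ₁ γ₂ : ℝ → M} (h₁ : Continuous γ₁) (h₂ : Continuous γ₂) (j : ℤ) :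
    (∫ t in (j : ℝ)..((j : ℝ) + 1), dist (γ₁ t) (γ₂ t)) ≤ (2 : ℝ) ^ (|j|) * rho γ₁ γ₂ := by
  have h := Summable.le_tsum (rho_summable h₁ h₂) j (fun i _ => rho_term_nonneg i)
  have h2 : (0:ℝ) < (2 : ℝ) ^ (-|j|) := by positivity
  rw [← rho] at h
  calc (∫ t in (j : ℝ)..((j : ℝ) + 1), dist (γ₁ t) (γ₂ t))
      = (2:ℝ) ^ (|j|) * ((2 : ℝ) ^ (-|j|) * ∫ t in (j : ℝ)..((j : ℝ) + 1), dist (γ₁ t) (γ₂ t)) := by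
        rw [← mul_assoc, ← zpow_add₀ (two_ne_zero), add_neg_cancel, zpow_zero, one_mul]
    _ ≤ (2:ℝ) ^ (|j|) * rho γ₁ γ₂ := by
        apply mul_le_mul_of_nonneg_left h (by positivity)


noncomputable def Kc : ℝ := ∑' i : ℤ, ((2:ℝ) ^ (-(1/2) : ℝ)) ^ i.natAbs

lemma summable_Kc : Summable (fun i : ℤ => ((2:ℝ) ^ (-(1/2) : ℝ)) ^ i.natAbs) := by
  have hg : Summable (fun n : ℕ => ((2:ℝ) ^ (-(1/2) : ℝ)) ^ n) :=
    summable_geometric_of_lt_one (by positivity)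
      (Real.rpow_lt_one_of_one_lt_of_neg one_lt_two (by norm_num))
  apply Summable.of_nat_of_neg <;> simpa using hg

lemma one_le_Kc : 1 ≤ Kc := by
  have := Summable.le_tsum summable_Kc 0 (fun i _ => by positivity)
  rw [Kc]
  simpa using this

lemma zpow_sub_le {i j : ℤ} {c : ℕ} (hc : 2 ≤ c) (hj : |(j:ℝ)| ≤ |(i:ℝ)| / c + 1) :
    (2:ℝ) ^ (|j| - |i|) ≤ 2 * ((2:ℝ) ^ (-(1/2) : ℝ)) ^ i.natAbs := by
  have h2 : (0:ℝ) < 2 := two_pos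
  have hexp : ((|j| - |i| : ℤ) : ℝ) ≤ 1 - (i.natAbs : ℝ) / 2 := by
    have hi : ((i.natAbs : ℝ)) = |(i:ℝ)| := by simp [Nat.cast_natAbs, Int.cast_abs]
    have hdiv : |(i:ℝ)| / c ≤ |(i:ℝ)| / 2 :=
      div_le_div_of_nonneg_left (abs_nonneg _) h2 (by exact_mod_cast hc)
    push_cast
    linarith
  calc (2:ℝ) ^ (|j| - |i|) = (2:ℝ) ^ (((|j| - |i| : ℤ)):ℝ) := by
        rw [Real.rpow_intCast]
    _ ≤ (2:ℝ) ^ ((1 : ℝ) - (i.natAbs : ℝ)/2) :=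
        Real.rpow_le_rpow_of_exponent_le one_le_two hexp
    _ = 2 * ((2:ℝ) ^ (-(1/2) : ℝ)) ^ i.natAbs := by
        rw [← Real.rpow_natCast ((2:ℝ) ^ (-(1/2) : ℝ)) i.natAbs, ← Real.rpow_mul (le_of_lt h2)]
        rw [sub_eq_add_neg, Real.rpow_add h2]
        norm_num
        ring_nf


variable {M : Type*} [MetricSpace M] [CompactSpace M]

lemma rho_rescale_le {c : ℕ} (hc : 2 ≤ c) {γ₁ γ₂ : ℝ → M}
    (h₁ : Continuous γ₁) (h₂ : Continuous γ₂) {r : ℝ} (hr0 : 0 ≤ r) (hr1 : r < 1) :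
    rho (timeRescale c (fun t => γ₁ (t + r))) (timeRescale c (fun t => γ₂ (t + r)))
      ≤ (6 * c * Kc) * rho γ₁ γ₂ := by
  have hc0 : (0:ℝ) < c := by positivity
  have hcne : (c:ℝ) ≠ 0 := ne_of_gt hc0
  set ρ₀ := rho γ₁ γ₂ with hρ₀
  have hρ₀0 : 0 ≤ ρ₀ := rho_nonneg
  have hcont₁ : Continuous (timeRescale c (fun t => γ₁ (t + r))) := by
    unfold timeRescale
    exact h₁.comp ((continuous_id.div_const _).add continuous_const)
  have hcont₂ : Continuous (timeRescale c (fun t => γ₂ (t + r))) := by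
    unfold timeRescale
    exact h₂.comp ((continuous_id.div_const _).add continuous_const)
  have key : ∀ i : ℤ,
      (2 : ℝ) ^ (-|i|) * (∫ t in (i : ℝ)..((i : ℝ) + 1),
        dist ((timeRescale c (fun t => γ₁ (t + r))) t) ((timeRescale c (fun t => γ₂ (t + r))) t))
      ≤ (6 * c * ρ₀) * ((2:ℝ) ^ (-(1/2) : ℝ)) ^ i.natAbs := by
    intro i
    set j : ℤ := ⌊(i:ℝ)/c + r⌋ with hj
    have hja : (j:ℝ) ≤ (i:ℝ)/c + r := Int.floor_le _
    have hjb : (i:ℝ)/c + r < (j:ℝ) + 1 := Int.lt_floor_add_one _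
    -- step 1 : change of variables
    have step1 : (∫ t in (i : ℝ)..((i : ℝ) + 1),
        dist ((timeRescale c (fun t => γ₁ (t + r))) t) ((timeRescale c (fun t => γ₂ (t + r))) t))
        = c * ∫ s in ((i:ℝ)/c + r)..(((i:ℝ)+1)/c + r), dist (γ₁ s) (γ₂ s) := by
      have e1 : (∫ t in (i : ℝ)..((i : ℝ) + 1),
          dist ((timeRescale c (fun t => γ₁ (t + r))) t) ((timeRescale c (fun t => γ₂ (t + r))) t))
          = ∫ t in (i : ℝ)..((i : ℝ) + 1), (fun s => dist (γ₁ (s + r)) (γ₂ (s + r))) (t / c) := rfl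
      rw [e1, intervalIntegral.integral_comp_div (fun s => dist (γ₁ (s + r)) (γ₂ (s + r))) hcne]
      rw [intervalIntegral.integral_comp_add_right (fun s => dist (γ₁ s) (γ₂ s)) r]
      simp [smul_eq_mul]
    -- step 2 : the interval is inside [j, j+2]
    have hsub : (∫ s in ((i:ℝ)/c + r)..(((i:ℝ)+1)/c + r), dist (γ₁ s) (γ₂ s))
        ≤ ∫ s in (j:ℝ)..((j:ℝ)+2), dist (γ₁ s) (γ₂ s) := by
      apply intervalIntegral.integral_mono_interval hja
      · have e : ((i:ℝ)+1)/c = (i:ℝ)/c + 1/c := by ring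
        have : (0:ℝ) ≤ 1/c := by positivity
        rw [e]; linarith
      · have h1c : 1/(c:ℝ) ≤ 1 := by
          rw [div_le_one hc0]; exact_mod_cast le_trans one_le_two hc
        have : ((i:ℝ)+1)/c = (i:ℝ)/c + 1/c := by ring
        linarith
      · exact ae_of_all _ (fun x => dist_nonneg)
      · exact phi_ii h₁ h₂ _ _
    have hsplit : (∫ s in (j:ℝ)..((j:ℝ)+2), dist (γ₁ s) (γ₂ s))
        = (∫ s in (j:ℝ)..((j:ℝ)+1), dist (γ₁ s) (γ₂ s))
          + ∫ s in ((j:ℝ)+1)..((j:ℝ)+2), dist (γ₁ s) (γ₂ s) := by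
      rw [intervalIntegral.integral_add_adjacent_intervals (phi_ii h₁ h₂ _ _) (phi_ii h₁ h₂ _ _)]
    -- step 3 : each piece bounded via rho
    have hb1 : (∫ s in (j:ℝ)..((j:ℝ)+1), dist (γ₁ s) (γ₂ s)) ≤ (2:ℝ) ^ (|j|) * ρ₀ :=
      integral_le_rho h₁ h₂ j
    have hb2 : (∫ s in ((j:ℝ)+1)..((j:ℝ)+2), dist (γ₁ s) (γ₂ s)) ≤ (2:ℝ) ^ (|j+1|) * ρ₀ := by
      have := integral_le_rho h₁ h₂ (j+1)
      push_cast at this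
      convert this using 2 <;> ring
    -- step 4 : combine
    have hw : (0:ℝ) < (2:ℝ) ^ (-|i|) := by positivity
    have hq : (0:ℝ) ≤ ((2:ℝ) ^ (-(1/2) : ℝ)) ^ i.natAbs := by positivity
    have hzij : (2:ℝ) ^ (-|i|) * (2:ℝ) ^ (|j|) = (2:ℝ) ^ (|j| - |i|) := by
      rw [← zpow_add₀ (two_ne_zero)]; ring_nf
    have habs : |(j:ℝ)| ≤ |(i:ℝ)| / c + 1 := by
      have hd1 : (i:ℝ)/c ≤ |(i:ℝ)|/c := by gcongr; exact le_abs_self _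
      have hd2 : -(|(i:ℝ)|/c) ≤ (i:ℝ)/c := by
        rw [← neg_div]; gcongr; exact neg_abs_le _
      rw [abs_le]
      constructor <;> linarith
    set q : ℝ := ((2:ℝ) ^ (-(1/2) : ℝ)) ^ i.natAbs with hqdef
    have hwj : (2:ℝ) ^ (-|i|) * (2:ℝ) ^ (|j|) ≤ 2 * q := by
      rw [hzij]; exact zpow_sub_le hc habs
    have h2j : (2:ℝ) ^ (|j+1|) ≤ 2 * (2:ℝ) ^ (|j|) := by
      have habs1 : |j+1| ≤ |j| + 1 := (abs_add_le j 1).trans (by norm_num)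
      calc (2:ℝ) ^ (|j+1|) ≤ (2:ℝ) ^ (|j| + 1) := by
            apply zpow_le_zpow_right₀ one_le_two habs1
        _ = 2 * (2:ℝ) ^ (|j|) := by rw [zpow_add₀ two_ne_zero, zpow_one]; ring
    have hwj1 : (2:ℝ) ^ (-|i|) * (2:ℝ) ^ (|j+1|) ≤ 4 * q :=
      calc (2:ℝ) ^ (-|i|) * (2:ℝ) ^ (|j+1|) ≤ (2:ℝ) ^ (-|i|) * (2 * (2:ℝ) ^ (|j|)) :=
            mul_le_mul_of_nonneg_left h2j hw.le
        _ = 2 * ((2:ℝ) ^ (-|i|) * (2:ℝ) ^ (|j|)) := by ring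
        _ ≤ 2 * (2 * q) := by linarith
        _ = 4 * q := by ring
    calc (2 : ℝ) ^ (-|i|) * (∫ t in (i : ℝ)..((i : ℝ) + 1),
        dist ((timeRescale c (fun t => γ₁ (t + r))) t) ((timeRescale c (fun t => γ₂ (t + r))) t))
        = (2 : ℝ) ^ (-|i|) * ((c:ℝ) * ∫ s in ((i:ℝ)/c + r)..(((i:ℝ)+1)/c + r),
            dist (γ₁ s) (γ₂ s)) := by rw [step1]
      _ ≤ (2 : ℝ) ^ (-|i|) * ((c:ℝ) * ((2:ℝ) ^ (|j|) * ρ₀ + (2:ℝ) ^ (|j+1|) * ρ₀)) := by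
          apply mul_le_mul_of_nonneg_left _ hw.le
          apply mul_le_mul_of_nonneg_left _ hc0.le
          calc (∫ s in ((i:ℝ)/c + r)..(((i:ℝ)+1)/c + r), dist (γ₁ s) (γ₂ s))
              ≤ ∫ s in (j:ℝ)..((j:ℝ)+2), dist (γ₁ s) (γ₂ s) := hsub
            _ = _ + _ := hsplit
            _ ≤ (2:ℝ) ^ (|j|) * ρ₀ + (2:ℝ) ^ (|j+1|) * ρ₀ := add_le_add hb1 hb2
      _ = (c:ℝ) * ((2:ℝ) ^ (-|i|) * (2:ℝ) ^ (|j|) + (2:ℝ) ^ (-|i|) * (2:ℝ) ^ (|j+1|)) * ρ₀ := by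
          ring
      _ ≤ (c:ℝ) * (2 * q + 4 * q) * ρ₀ := by gcongr
      _ = (6 * c * ρ₀) * q := by ring
  calc rho (timeRescale c (fun t => γ₁ (t + r))) (timeRescale c (fun t => γ₂ (t + r)))
      ≤ ∑' i : ℤ, (6 * (c:ℝ) * ρ₀) * ((2:ℝ) ^ (-(1/2) : ℝ)) ^ i.natAbs :=
        Summable.tsum_le_tsum key (rho_summable hcont₁ hcont₂) (summable_Kc.mul_left _)
    _ = (6 * c * ρ₀) * Kc := tsum_mul_left
    _ = (6 * c * Kc) * ρ₀ := by ring

end E13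

namespace E13

variable {M : Type*} [MetricSpace M] [CompactSpace M]

lemma iterate_shift (γ : ℝ → M) (k : ℕ) : timeOneShift^[k] γ = fun t => γ (t + k) := by
  induction k with
  | zero => simp
  | succ m ih =>
    rw [Function.iterate_succ_apply', ih]
    funext t
    simp [timeOneShift]
    ring_nf

lemma continuous_of_lip {L : ℝ} {γ : ℝ → M} (h : LipschitzCurve L γ) : Continuous γ := by
  apply LipschitzWith.continuous (K := L.toNNReal)
  apply LipschitzWith.of_dist_le_mul
  intro s t
  calc dist (γ s) (γ t) ≤ L * |s - t| := h s t
    _ ≤ L.toNNReal * |s - t| := by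
        apply mul_le_mul_of_nonneg_right (Real.le_coe_toNNReal L) (abs_nonneg _)
    _ = L.toNNReal * dist s t := by rw [Real.dist_eq]

open Classical in
lemma cover_transfer {L : ℝ} {A : Set (ℝ → M)} (hlipA : ∀ γ ∈ A, LipschitzCurve L γ)
    {c : ℕ} (hc : 2 ≤ c) {ε : ℝ} (hε : 0 < ε) {n : ℕ} {E : Finset (ℝ → M)}
    (hE : IsDynCover rho timeOneShift A ε n E) :
    IsDynCover rho timeOneShift (timeRescale (M := M) c '' A) (6 * c * Kc * ε) (c * n)
      (E.image (timeRescale c)) := by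
  have hc0 : 0 < c := by omega
  have hcR : (0:ℝ) < c := by exact_mod_cast hc0
  constructor
  · intro y hy
    rw [Finset.coe_image] at hy
    exact Set.image_mono hE.1 hy
  · rintro y ⟨y₀, hy₀, rfl⟩
    obtain ⟨x, hxE, hx⟩ := hE.2 y₀ hy₀
    have hxA : x ∈ A := hE.1 hxE
    refine ⟨timeRescale c x, Finset.mem_image_of_mem _ hxE, ?_⟩
    intro i hi
    have hcx : Continuous x := continuous_of_lip (hlipA x hxA)
    have hcy : Continuous y₀ := continuous_of_lip (hlipA y₀ hy₀)
    set k : ℕ := i / c with hk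
    set r : ℝ := (i:ℝ)/c - k with hr
    have hr0 : 0 ≤ r := by
      rw [hr, sub_nonneg, le_div_iff₀ hcR]
      exact_mod_cast Nat.div_mul_le_self i c
    have hr1 : r < 1 := by
      rw [hr, sub_lt_iff_lt_add, div_lt_iff₀ hcR]
      have : i < c * (i / c) + c := by
        have h1 := Nat.div_add_mod i c
        have h2 := Nat.mod_lt i hc0
        omega
      push_cast
      calc (i:ℝ) < (c:ℝ) * (k:ℝ) + c := by exact_mod_cast this
        _ = ((1:ℝ) + (k:ℝ)) * c := by ring
    have hkn : k < n := by
      rw [hk, Nat.div_lt_iff_lt_mul hc0, Nat.mul_comm]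
      exact hi
    have hik : ∀ γ : ℝ → M, timeOneShift^[i] (timeRescale c γ)
        = timeRescale c (fun t => (fun s => γ (s + (k:ℝ))) (t + r)) := by
      intro γ
      rw [iterate_shift]
      funext t
      simp only [timeRescale]
      congr 1
      rw [hr]
      field_simp
      ring
    rw [hik x, hik y₀]
    have key := rho_rescale_le hc
      (γ₁ := fun s => x (s + (k:ℝ))) (γ₂ := fun s => y₀ (s + (k:ℝ)))
      (hcx.comp (continuous_id.add continuous_const))
      (hcy.comp (continuous_id.add continuous_const)) hr0 hr1
    have hcov : rho (fun s => x (s + (k:ℝ))) (fun s => y₀ (s + (k:ℝ))) < ε := by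
      have := hx k hkn
      rwa [iterate_shift, iterate_shift] at this
    have hCpos : (0:ℝ) < 6 * c * Kc := by
      have := one_le_Kc
      positivity
    calc rho (timeRescale c fun t => (fun s => x (s + (k:ℝ))) (t + r))
          (timeRescale c fun t => (fun s => y₀ (s + (k:ℝ))) (t + r))
        ≤ (6 * c * Kc) * rho (fun s => x (s + (k:ℝ))) (fun s => y₀ (s + (k:ℝ))) := key
      _ < 6 * c * Kc * ε := mul_lt_mul_of_pos_left hcov hCpos

end E13

namespace E13

lemma coverCard_mono_n {X : Type*} (d : X → X → ℝ) (f : X → X) (F : Set X) (ε : ℝ)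
    {m n : ℕ} (h : m ≤ n) : coverCard d f F ε m ≤ coverCard d f F ε n := by
  simp only [coverCard]
  apply le_iInf₂
  intro E hE
  apply iInf₂_le E
  exact ⟨hE.1, fun y hy => by
    obtain ⟨x, hx, hxy⟩ := hE.2 y hy
    exact ⟨x, hx, fun i hi => hxy i (lt_of_lt_of_le hi h)⟩⟩

lemma one_le_coverCard {X : Type*} {d : X → X → ℝ} {f : X → X} {F : Set X} {ε : ℝ} {n : ℕ}
    (hF : F.Nonempty) : 1 ≤ coverCard d f F ε n := by
  simp only [coverCard]
  apply le_iInf₂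
  intro E hE
  obtain ⟨y, hy⟩ := hF
  obtain ⟨x, hx, -⟩ := hE.2 y hy
  have : 0 < E.card := Finset.card_pos.2 ⟨x, hx⟩
  exact_mod_cast this

lemma coverCard_empty {X : Type*} (d : X → X → ℝ) (f : X → X) (ε : ℝ) (n : ℕ) :
    coverCard d f (∅ : Set X) ε n = 0 := by
  apply le_antisymm _ zero_le
  have hcov : IsDynCover d f (∅ : Set X) ε n ∅ :=
    ⟨by simp, fun y hy => absurd hy (Set.notMem_empty y)⟩
  simp only [coverCard]
  have h := iInf₂_le (f := fun (E : Finset X) (_ : IsDynCover d f (∅ : Set X) ε n E) =>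
    (E.card : ℕ∞)) (∅ : Finset X) hcov
  simpa using h

variable {M : Type*} [MetricSpace M] [CompactSpace M]

open Classical in
lemma coverCard_transfer {L : ℝ} {A : Set (ℝ → M)} (hlipA : ∀ γ ∈ A, LipschitzCurve L γ)
    {c : ℕ} (hc : 2 ≤ c) {ε : ℝ} (hε : 0 < ε) (n : ℕ) :
    coverCard rho timeOneShift (timeRescale (M := M) c '' A) (6 * c * Kc * ε) (c * n)
      ≤ coverCard rho timeOneShift A ε n := by
  simp only [coverCard]
  apply le_iInf₂
  intro E hE
  apply iInf₂_le_of_le (E.image (timeRescale c)) (cover_transfer hlipA hc hε hE)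
  exact_mod_cast Finset.card_image_le

end E13

namespace E13

lemma ediv_mono {a : EReal} (ha : 0 ≤ a) {k n : ℕ} (hk : 1 ≤ k) (hkn : k ≤ n) :
    a / (n : EReal) ≤ a / (k : EReal) := by
  have hkR : (0:ℝ) < (k:ℝ) := by exact_mod_cast hk
  have h1 : ((n:EReal))⁻¹ ≤ ((k:EReal))⁻¹ := by
    rw [← EReal.coe_coe_eq_natCast n, ← EReal.coe_coe_eq_natCast k,
      ← EReal.coe_inv, ← EReal.coe_inv, EReal.coe_le_coe_iff, ← one_div, ← one_div]
    apply one_div_le_one_div_of_le hkR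
    exact_mod_cast hkn
  exact mul_le_mul_of_nonneg_left h1 ha

lemma ereal_natCast_nonneg (n : ℕ) : (0 : EReal) ≤ (n : EReal) := by
  rw [← EReal.coe_coe_eq_natCast n]
  exact_mod_cast Nat.cast_nonneg n

variable {M : Type*} [MetricSpace M] [CompactSpace M]

lemma entropy_compare {L : ℝ} {A : Set (ℝ → M)} (hlipA : ∀ γ ∈ A, LipschitzCurve L γ)
    {c : ℕ} (hc : 2 ≤ c) (hA : A.Nonempty) :
    topEntropy rho timeOneShift (timeRescale (M := M) c '' A)
      ≤ topEntropy rho timeOneShift A := by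
  apply iSup₂_le
  intro ε' hε'
  have hK1 := one_le_Kc
  have hc0R : (0:ℝ) < c := by positivity
  have hCpos : (0:ℝ) < 6 * c * Kc := by positivity
  set ε : ℝ := ε' / (6 * c * Kc) with hεdef
  have hε : 0 < ε := div_pos hε' hCpos
  have hCε : 6 * c * Kc * ε = ε' := by
    rw [hεdef]; field_simp
  set F : ℕ → EReal := fun k => ENNReal.log (coverCard rho timeOneShift A ε k) / (k : EReal)
    with hF
  set g : ℕ → ℕ := fun n => n / c + 1 with hg
  have hkey : ∀ᶠ n in atTop,
      ENNReal.log (coverCard rho timeOneShift (timeRescale (M := M) c '' A) ε' n) / (n : EReal)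
        ≤ (F ∘ g) n := by
    filter_upwards [Filter.eventually_ge_atTop 1] with n hn
    have hgn1 : 1 ≤ g n := Nat.le_add_left 1 (n / c)
    have hgnn : g n ≤ n := by
      have h1 : n / c ≤ n / 2 := Nat.div_le_div_left hc (by norm_num)
      simp only [hg]
      omega
    have hn_le : n ≤ c * g n := by
      have h1 := Nat.div_add_mod n c
      have h2 := Nat.mod_lt n (show 0 < c by omega)
      have h3 : c * (n / c + 1) = c * (n / c) + c := by ring
      simp only [hg, h3]
      omega
    have hnum : coverCard rho timeOneShift (timeRescale (M := M) c '' A) ε' n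
        ≤ coverCard rho timeOneShift A ε (g n) := by
      calc coverCard rho timeOneShift (timeRescale (M := M) c '' A) ε' n
          ≤ coverCard rho timeOneShift (timeRescale (M := M) c '' A) ε' (c * g n) :=
            coverCard_mono_n _ _ _ _ hn_le
        _ ≤ coverCard rho timeOneShift A ε (g n) := by
            rw [← hCε]; exact coverCard_transfer hlipA hc hε (g n)
    have hlog : ENNReal.log (coverCard rho timeOneShift (timeRescale (M := M) c '' A) ε' n)
        ≤ ENNReal.log (coverCard rho timeOneShift A ε (g n)) :=
      ENNReal.log_monotone (ENat.toENNReal_le.2 hnum)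
    have hlog0 : (0 : EReal) ≤ ENNReal.log (coverCard rho timeOneShift A ε (g n)) := by
      rw [ENNReal.zero_le_log_iff]
      rw [← ENat.toENNReal_one, ENat.toENNReal_le]
      exact one_le_coverCard hA
    calc ENNReal.log (coverCard rho timeOneShift (timeRescale (M := M) c '' A) ε' n) / (n : EReal)
        ≤ ENNReal.log (coverCard rho timeOneShift A ε (g n)) / (n : EReal) :=
          EReal.div_le_div_right_of_nonneg (ereal_natCast_nonneg n) hlog
      _ ≤ ENNReal.log (coverCard rho timeOneShift A ε (g n)) / ((g n : ℕ) : EReal) :=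
          ediv_mono hlog0 hgn1 hgnn
      _ = (F ∘ g) n := rfl
  have hgt : Filter.Tendsto g atTop atTop := by
    apply Filter.tendsto_atTop_atTop.2
    intro b
    refine ⟨c * b, fun n hn => ?_⟩
    have : b ≤ n / c := by
      rw [Nat.le_div_iff_mul_le (show 0 < c by omega), Nat.mul_comm]
      exact hn
    simp only [hg]
    omega
  refine le_trans (Filter.limsup_le_limsup hkey) ?_
  have e1 : Filter.limsup (F ∘ g) atTop = Filter.limsup F (Filter.map g atTop) := by
    simp only [Filter.limsup]
    rw [Filter.map_map]
  rw [e1]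
  refine le_trans (Filter.limsup_le_limsup_of_le hgt) ?_
  simp only [topEntropy]
  exact le_iSup₂ (f := fun (e : ℝ) (_ : (0:ℝ) < e) => Filter.limsup
    (fun k : ℕ => ENNReal.log (coverCard rho timeOneShift A e k) / (k : EReal)) atTop) ε hε

end E13

namespace E13

lemma topEntropy_empty {X : Type*} (d : X → X → ℝ) (f : X → X) :
    topEntropy d f (∅ : Set X) = ⊥ := by
  apply le_antisymm _ bot_le
  apply iSup₂_le
  intro ε hε
  refine Filter.limsup_le_of_le (by isBoundedDefault) ?_
  filter_upwards [Filter.eventually_ge_atTop 1] with n hn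
  rw [coverCard_empty]
  rw [ENat.toENNReal_zero, ENNReal.log_zero]
  have hpos : (0 : EReal) < (n : EReal) := by
    rw [← EReal.coe_coe_eq_natCast n]
    exact_mod_cast (show (0:ℝ) < (n:ℝ) by exact_mod_cast hn)
  rw [EReal.bot_div_of_pos_ne_top hpos (EReal.natCast_ne_top n)]

end E13

/-- Let `A` be a shift-invariant set of `L`-Lipschitz curves into a
compact metric space, `c ≥ 1` an integer, and `Ã = {t ↦ γ(t/c) : γ ∈ A}`. If the topological
entropy of the time-one shift `F₁` on `(Ã, ρ)` is infinite, then so is its topological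
entropy on `(A, ρ)`. -/
theorem entropy_infinite_of_rescaled_infinite {M : Type*} [MetricSpace M] [CompactSpace M]
    (L : ℝ) (hL : 0 < L) (A : Set (ℝ → M)) (hlipA : ∀ γ ∈ A, LipschitzCurve L γ)
    (hshift : ∀ γ ∈ A, ∀ s : ℝ, (fun t => γ (t + s)) ∈ A)
    (c : ℕ) (hc : 1 ≤ c)
    (h : topEntropy rho timeOneShift (timeRescale (M := M) c '' A) = ⊤) :
    topEntropy rho timeOneShift A = ⊤ := by
  rcases eq_or_lt_of_le hc with hc1 | hc2
  · have hid : timeRescale (M := M) c = fun γ => γ := by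
      funext γ t
      simp [timeRescale, ← hc1]
    rwa [hid, Set.image_id'] at h
  · have hc2' : 2 ≤ c := hc2
    rcases A.eq_empty_or_nonempty with hA | hA
    · rw [hA, Set.image_empty, E13.topEntropy_empty] at h
      exact absurd h (by simp)
    · rw [eq_top_iff, ← h]
      exact E13.entropy_compare hlipA hc2' hA
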